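/- Let p ∈ ℤ, let q ≥ 1 be an integer, and let V : ℝ → ℂ be a 2π-periodic integrable function whose Fourier coefficients satisfy V̂(m) = 0 for every m ∈ ℤ not divisible by q. Then for all k, ℓ ∈ ℤ one has V̂(k−ℓ)·(e^{2πi(p/q)k²} − e^{2πi(p/q)ℓ²}) = 0; that is, all matrix entries of the commutator [e^{2πi(p/q)Δ}, V] in the Fourier basis vanish. -/
import Mathlib


/-- The `k`-th Fourier coefficient of a `2π`-periodic function:
`û(k) = (1/2π) ∫₀^{2π} u(x) e^{−ikx} dx`. -/
noncomputable def fourierCoef (u : ℝ → ℂ) (k : ℤ) : ℂ :=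
  (1 / (2 * (Real.pi : ℂ))) *
    ∫ x in (0:ℝ)..(2 * Real.pi), u x * Complex.exp (-(Complex.I * (k : ℂ) * (x : ℂ)))

/-- If `V` is `2π`-periodic, integrable, with `V̂(m) = 0` whenever `q ∤ m`,
then for all `k, ℓ ∈ ℤ`, `V̂(k−ℓ)·(e^{2πi(p/q)k²} − e^{2πi(p/q)ℓ²}) = 0`, i.e. all matrix
entries of the commutator `[e^{2πi(p/q)Δ}, V]` in the Fourier basis vanish. -/
theorem stmt1 (p : ℤ) (q : ℕ) (hq : 1 ≤ q) (V : ℝ → ℂ)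
    (hV_per : ∀ x, V (x + 2 * Real.pi) = V x)
    (hV_int : IntervalIntegrable V MeasureTheory.volume 0 (2 * Real.pi))
    (hVq : ∀ m : ℤ, ¬ ((q : ℤ) ∣ m) → fourierCoef V m = 0) :
    ∀ k l : ℤ,
      fourierCoef V (k - l) *
        (Complex.exp (2 * (Real.pi : ℂ) * Complex.I * ((p : ℂ) / (q : ℂ)) * (k : ℂ) ^ 2) -
         Complex.exp (2 * (Real.pi : ℂ) * Complex.I * ((p : ℂ) / (q : ℂ)) * (l : ℂ) ^ 2)) = 0 := by
  intro k l
  by_cases h : (q : ℤ) ∣ (k - l)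
  · obtain ⟨t, ht⟩ := h
    have hq0 : (q : ℂ) ≠ 0 := by
      exact_mod_cast Nat.cast_ne_zero.mpr (Nat.one_le_iff_ne_zero.mp hq)
    have hkl : (k : ℂ) = (l : ℂ) + (q : ℂ) * (t : ℂ) := by
      have : (k : ℂ) - (l : ℂ) = (q : ℂ) * (t : ℂ) := by exact_mod_cast congrArg (Int.cast : ℤ → ℂ) ht
      linear_combination this
    have hexp : Complex.exp (2 * (Real.pi : ℂ) * Complex.I * ((p : ℂ) / (q : ℂ)) * (k : ℂ) ^ 2) =
        Complex.exp (2 * (Real.pi : ℂ) * Complex.I * ((p : ℂ) / (q : ℂ)) * (l : ℂ) ^ 2) := by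
      have key : 2 * (Real.pi : ℂ) * Complex.I * ((p : ℂ) / (q : ℂ)) * (k : ℂ) ^ 2 =
          2 * (Real.pi : ℂ) * Complex.I * ((p : ℂ) / (q : ℂ)) * (l : ℂ) ^ 2 +
          ((p * t * (2 * l + q * t) : ℤ) : ℂ) * (2 * Real.pi * Complex.I) := by
        rw [hkl]
        push_cast
        field_simp
        ring
      rw [key, Complex.exp_add, Complex.exp_int_mul_two_pi_mul_I, mul_one]
    rw [hexp, sub_self, mul_zero]
  · rw [hVq _ h, zero_mul]
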